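/- arXiv:1305.0092 — 2 statements merged into one kernel-verified Lean document; each statement's English description precedes it below -/
import Mathlib

section
/- For r_s > 0, the function g(r) = r(1 + r_s/(4r))² satisfies the differential equation r_s/g(r) = 1 - (r·g'(r)/g(r))² for all r > r_s/4. -/
theorem schwarzschild_isotropic_ode (rs : ℝ) (hrs : 0 < rs) (r : ℝ) (hr : rs / 4 < r) :
    let g : ℝ → ℝ := fun x => x * (1 + rs / (4 * x)) ^ 2
    rs / g r = 1 - (r * deriv g r / g r) ^ 2 := by
  intro g
  have hrpos : 0 < r := lt_trans (by linarith) hr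
  have hr0 : r ≠ 0 := ne_of_gt hrpos
  have hinner : HasDerivAt (fun x : ℝ => 1 + rs / (4 * x)) (rs / 4 * (-(r ^ 2)⁻¹)) r := by
    have h1 : HasDerivAt (fun x : ℝ => x⁻¹) (-(r ^ 2)⁻¹) r := hasDerivAt_inv hr0
    have h2 := (h1.const_mul (rs / 4)).const_add 1
    have e : (fun x : ℝ => 1 + rs / (4 * x)) = fun x => 1 + rs / 4 * x⁻¹ := by
      funext x; ring
    rw [e]; exact h2
  have hg : HasDerivAt g ((1 + rs / (4 * r)) ^ 2 +
      r * (2 * (1 + rs / (4 * r)) * (rs / 4 * (-(r ^ 2)⁻¹)))) r := by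
    have h := (hasDerivAt_id r).mul (hinner.pow 2)
    simp only [id] at h
    have e : g = id * (fun x : ℝ => 1 + rs / (4 * x)) ^ 2 := by
      funext x; rfl
    rw [e]
    exact h.congr_deriv (by simp)
  have hd : deriv g r = (1 + rs / (4 * r)) ^ 2 +
      r * (2 * (1 + rs / (4 * r)) * (rs / 4 * (-(r ^ 2)⁻¹))) := hg.deriv
  have hu : 0 < 1 + rs / (4 * r) := by positivity
  have hgr : g r = r * (1 + rs / (4 * r)) ^ 2 := rfl
  have hgne : g r ≠ 0 := by
    rw [hgr]; positivity
  rw [hd, hgr]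
  field_simp
  ring
end

section
/- For real constants r_s, r_Q with r_s² /4 > r_Q² > 0, the function g(r) = r(1 + (r_s²/4 - r_Q²)/(4r²)) + r_s/2 satisfies r_s/g(r) - r_Q²/g(r)² = 1 - (r·g'(r)/g(r))² for all sufficiently large r > 0 (specifically whenever g(r) > 0). -/
theorem reissner_nordstrom_isotropic_ode (rs rQ : ℝ)
    (h1 : rQ ^ 2 > 0) (h2 : rs ^ 2 / 4 > rQ ^ 2) (r : ℝ) (hr : 0 < r)
    (hg : 0 < r * (1 + (rs ^ 2 / 4 - rQ ^ 2) / (4 * r ^ 2)) + rs / 2) :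
    let g : ℝ → ℝ := fun x => x * (1 + (rs ^ 2 / 4 - rQ ^ 2) / (4 * x ^ 2)) + rs / 2
    rs / g r - rQ ^ 2 / (g r) ^ 2 = 1 - (r * deriv g r / g r) ^ 2 := by
  intro g
  have hr0 : r ≠ 0 := ne_of_gt hr
  set c : ℝ := rs ^ 2 / 4 - rQ ^ 2 with hc
  have hder : HasDerivAt g (1 - c / (4 * r ^ 2)) r := by
    have h1' : HasDerivAt (fun x : ℝ => x * (1 + c / (4 * x ^ 2)) + rs / 2)
        (1 - c / (4 * r ^ 2)) r := by
      have h2' : HasDerivAt (fun x : ℝ => x + c / 4 * x⁻¹ + rs / 2)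
          (1 + c / 4 * (-(r ^ 2)⁻¹)) r := by
        exact (((hasDerivAt_id r).add (((hasDerivAt_inv hr0).const_mul (c / 4)))).add_const
          (rs / 2)).congr_deriv (by ring)
      refine h2'.congr_of_eventuallyEq ?_ |>.congr_deriv (by field_simp; ring)
      filter_upwards [eventually_ne_nhds hr0] with x hx
      field_simp
    exact h1'
  have hd : deriv g r = 1 - c / (4 * r ^ 2) := hder.deriv
  have hgr : g r = r * (1 + c / (4 * r ^ 2)) + rs / 2 := rfl
  have hgne : g r ≠ 0 := ne_of_gt hg
  rw [hd]
  have hrQ : rQ ^ 2 = rs ^ 2 / 4 - c := by rw [hc]; ring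
  have key : rs * g r - rQ ^ 2 = (g r) ^ 2 - (r * (1 - c / (4 * r ^ 2))) ^ 2 := by
    rw [hgr, hrQ]
    field_simp
    ring
  obtain ⟨G, hG⟩ : ∃ G, g r = G := ⟨_, rfl⟩
  rw [hG] at key hgne ⊢
  field_simp at key ⊢
  linear_combination key
end
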